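/- Let (y_n) be a nondecreasing sequence of positive integers and A(n,k) its output array. For all n ≥ 1 and all k ≥ 0, A(n,k) ≤ C(n-1+k, k). -/

import Mathlib

/-- `x : Fin n → ℕ` (0-indexed version of `(x_1,…,x_n)`) is a valid n-tuple for the
input sequence `y`: `x_1 ≤ y n` and `x_{j+1} ≤ min (x_j) (y (n - j))` for `1 ≤ j ≤ n-1`. -/
def IsValid (y : ℕ → ℕ) (n : ℕ) (x : Fin n → ℕ) : Prop :=
  (∀ h : 0 < n, x ⟨0, h⟩ ≤ y n) ∧
  ∀ i : ℕ, ∀ h : i + 1 < n,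
    x ⟨i + 1, h⟩ ≤ min (x ⟨i, Nat.lt_of_succ_lt h⟩) (y (n - (i + 1)))

/-- `A y n k` : number of valid n-tuples whose first entry equals `k`. -/
noncomputable def A (y : ℕ → ℕ) (n k : ℕ) : ℕ :=
  Nat.card {x : Fin n → ℕ // IsValid y n x ∧ ∀ h : 0 < n, x ⟨0, h⟩ = k}

/-- `W y n` : total number of valid n-tuples. -/
noncomputable def W (y : ℕ → ℕ) (n : ℕ) : ℕ :=
  Nat.card {x : Fin n → ℕ // IsValid y n x}

lemma isValid_anti {y : ℕ → ℕ} {n : ℕ} {x : Fin n → ℕ} (hx : IsValid y n x) :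
    ∀ (j i : ℕ) (hij : i ≤ j) (hj : j < n),
      x ⟨j, hj⟩ ≤ x ⟨i, lt_of_le_of_lt hij hj⟩ := by
  intro j
  induction j with
  | zero =>
    intro i hij hj
    obtain rfl : i = 0 := Nat.le_zero.mp hij
    exact le_refl _
  | succ m ih =>
    intro i hij hj
    rcases Nat.eq_or_lt_of_le hij with h | h
    · subst h; exact le_refl _
    · have h1 : x ⟨m + 1, hj⟩ ≤ x ⟨m, Nat.lt_of_succ_lt hj⟩ :=
        (hx.2 m hj).trans (min_le_left _ _)
      exact h1.trans (ih i (Nat.lt_succ_iff.mp h) (Nat.lt_of_succ_lt hj))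

theorem stmt7 (y : ℕ → ℕ) (hmono : ∀ m, 1 ≤ m → y m ≤ y (m + 1))
    (hpos : ∀ m, 1 ≤ m → 1 ≤ y m) (n k : ℕ) (hn : 1 ≤ n) :
    A y n k ≤ (n - 1 + k).choose k := by
  classical
  set m := n - 1 with hm
  have hidx : ∀ i : Fin m, (i : ℕ) + 1 < n := fun i => by
    have := i.2; omega
  -- bound on entries: every entry is ≤ k
  have hbd : ∀ (x : Fin n → ℕ), IsValid y n x → (∀ h : 0 < n, x ⟨0, h⟩ = k) →
      ∀ i : Fin m, x ⟨(i : ℕ) + 1, hidx i⟩ ≤ k := by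
    intro x hx hk i
    have h0 : (0 : ℕ) < n := hn
    have := isValid_anti hx ((i : ℕ) + 1) 0 (Nat.zero_le _) (hidx i)
    rw [hk h0] at this
    exact this
  -- the injection into Sym (Fin (k+1)) m
  let T := {x : Fin n → ℕ // IsValid y n x ∧ ∀ h : 0 < n, x ⟨0, h⟩ = k}
  let g : T → Fin m → Fin (k + 1) := fun t i =>
    ⟨t.1 ⟨(i : ℕ) + 1, hidx i⟩, Nat.lt_succ_of_le (hbd t.1 t.2.1 t.2.2 i)⟩
  let f : T → Sym (Fin (k + 1)) m := fun t =>
    ⟨(List.ofFn (g t) : Multiset (Fin (k + 1))), by simp⟩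
  have hsorted : ∀ t : T, List.Pairwise (· ≥ ·) (List.ofFn (g t)) := by
    intro t
    refine List.pairwise_ofFn.2 ?_
    intro i j hij
    show g t j ≤ g t i
    rw [Fin.le_def]
    exact isValid_anti t.2.1 ((j : ℕ) + 1) ((i : ℕ) + 1)
      (by exact_mod_cast Nat.succ_le_succ hij.le) (hidx j)
  have hinj : Function.Injective f := by
    intro a b hab
    have hml : (↑(List.ofFn (g a)) : Multiset (Fin (k + 1))) = ↑(List.ofFn (g b)) :=
      congrArg Subtype.val hab
    have hperm : List.Perm (List.ofFn (g a)) (List.ofFn (g b)) := Multiset.coe_eq_coe.mp hml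
    have : IsAntisymm (Fin (k + 1)) (· ≥ ·) := ⟨fun _ _ h1 h2 => le_antisymm h2 h1⟩
    have hlists : List.ofFn (g a) = List.ofFn (g b) :=
      List.Perm.eq_of_pairwise (fun _ _ _ _ h1 h2 => le_antisymm h2 h1) (hsorted a) (hsorted b) hperm
    have hg : g a = g b := List.ofFn_injective hlists
    apply Subtype.ext
    funext i
    rcases i with ⟨iv, hi⟩
    cases iv with
    | zero =>
      rw [a.2.2 hn, b.2.2 hn]
    | succ j =>
      have hj : j < m := by omega
      have := congrFun hg ⟨j, hj⟩
      have hv := congrArg Fin.val this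
      simpa [g] using hv
  have hcard : A y n k ≤ Nat.card (Sym (Fin (k + 1)) m) :=
    Nat.card_le_card_of_injective f hinj
  have hc2 : Nat.card (Sym (Fin (k + 1)) m) = (m + k).choose m := by
    rw [Nat.card_eq_fintype_card, Sym.card_sym_eq_choose]
    congr 1
    · simp; omega
  have hsym : (m + k).choose m = (m + k).choose k := by
    rw [← Nat.choose_symm (Nat.le_add_left k m)]
    congr 1
    omega
  calc A y n k ≤ Nat.card (Sym (Fin (k + 1)) m) := hcard
    _ = (m + k).choose k := by rw [hc2, hsym]
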